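/- For integers n ≥ 1 and k ≥ 2, the supremum M_k^n of π(F) over all families F of n ships of size k in ℤ satisfies M_k^n ≥ 1 - e / n^{1/(k-1)}. -/

import Mathlib

-- factorial lower bound: t^t <= t! * e^t
lemma fact_lb (t : ℕ) : (t:ℝ)^t ≤ t.factorial * Real.exp t := by
  have h1 : (t:ℝ)^t / t.factorial ≤ Real.exp t := by
    calc (t:ℝ)^t / t.factorial ≤ ∑ i ∈ Finset.range (t+1), (t:ℝ)^i / i.factorial := by
          refine Finset.single_le_sum (f := fun i => (t:ℝ)^i / i.factorial) ?_ (Finset.self_mem_range_succ t)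
          intro i _
          positivity
      _ ≤ Real.exp t := Real.sum_le_exp_of_nonneg (by positivity) _
  have h2 : (0:ℝ) < t.factorial := by exact_mod_cast t.factorial_pos
  calc (t:ℝ)^t = ((t:ℝ)^t / t.factorial) * t.factorial := by field_simp
    _ ≤ Real.exp t * t.factorial := mul_le_mul_of_nonneg_right h1 h2.le
    _ = t.factorial * Real.exp t := by ring


/-- A shooting pattern `X` hits a ship `S` if every translate of `S` intersects `X`. -/
def Hits (X S : Set ℤ) : Prop := ∀ n : ℤ, ∃ s ∈ S, n + s ∈ X

/-- Lower asymptotic density of a set of integers. -/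
noncomputable def lowerDensity (X : Set ℤ) : ℝ :=
  Filter.liminf (fun N : ℕ =>
    ((X ∩ Set.Icc (-(N:ℤ)) (N:ℤ)).ncard : ℝ) / (2 * N + 1)) Filter.atTop

open scoped Classical

noncomputable def ships (m k : ℕ) : Finset (Finset ℤ) :=
  ((Finset.Icc (0:ℤ) ((m:ℤ)-1)).powersetCard k).filter (fun s => (0:ℤ) ∈ s)

lemma ships_card_le (m k : ℕ) (hm : 1 ≤ m) (hk : 1 ≤ k) :
    (ships m k).card ≤ (m-1).choose (k-1) := by
  classical
  have : ∀ s ∈ ships m k, s.erase 0 ∈ (Finset.Icc (1:ℤ) ((m:ℤ)-1)).powersetCard (k-1) := by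
    intro s hs
    simp only [ships, Finset.mem_filter, Finset.mem_powersetCard] at hs ⊢
    obtain ⟨⟨hsub, hcard⟩, h0⟩ := hs
    constructor
    · intro x hx
      have hxs : x ∈ s := Finset.mem_of_mem_erase hx
      have hx0 : x ≠ 0 := Finset.ne_of_mem_erase hx
      have := hsub hxs
      simp only [Finset.mem_Icc] at this ⊢
      omega
    · rw [Finset.card_erase_of_mem h0, hcard]
  have hinj : Set.InjOn (fun s : Finset ℤ => s.erase 0) (ships m k) := by
    intro s hs t ht h
    simp only [ships, Finset.mem_filter, Finset.coe_filter, Set.mem_setOf_eq] at hs ht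
    have : insert (0:ℤ) (s.erase 0) = insert 0 (t.erase 0) := by
      simp only at h; rw [h]
    rwa [Finset.insert_erase hs.2, Finset.insert_erase ht.2] at this
  calc (ships m k).card ≤ ((Finset.Icc (1:ℤ) ((m:ℤ)-1)).powersetCard (k-1)).card :=
        Finset.card_le_card_of_injOn _ this hinj
    _ = ((Finset.Icc (1:ℤ) ((m:ℤ)-1)).card).choose (k-1) := Finset.card_powersetCard _ _
    _ = (m-1).choose (k-1) := by
        congr 1
        rw [Int.card_Icc]
        omega

-- the canonical ship ensures nonemptiness
lemma ships_nonempty (m k : ℕ) (hk : 1 ≤ k) (hmk : k ≤ m) : (ships m k).Nonempty := by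
  refine ⟨Finset.Icc (0:ℤ) ((k:ℤ)-1), ?_⟩
  simp only [ships, Finset.mem_filter, Finset.mem_powersetCard]
  refine ⟨⟨?_, ?_⟩, ?_⟩
  · exact Finset.Icc_subset_Icc le_rfl (by omega)
  · rw [Int.card_Icc]; omega
  · simp only [Finset.mem_Icc]; omega

-- per-block lemma
lemma block_miss (m k : ℕ) (hk : 1 ≤ k) (X : Set ℤ)
    (H : ∀ S ∈ ships m k, Hits X (S : Set ℤ)) (a : ℤ) :
    ((Finset.Icc a (a + m - 1)).filter (fun x => x ∉ X)).card ≤ k - 1 := by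
  by_contra hcon
  push_neg at hcon
  have hge : k ≤ ((Finset.Icc a (a + m - 1)).filter (fun x => x ∉ X)).card := by omega
  obtain ⟨C, hCsub, hCcard⟩ := Finset.exists_subset_card_eq hge
  have hCne : C.Nonempty := Finset.card_pos.mp (by omega)
  set s := C.min' hCne with hs
  have hsC : s ∈ C := C.min'_mem hCne
  have hmem : ∀ c ∈ C, c ∈ Finset.Icc a (a + m - 1) ∧ c ∉ X := by
    intro c hc
    have := hCsub hc
    simpa using this
  have hSship : C.image (fun c => c - s) ∈ ships m k := by
    simp only [ships, Finset.mem_filter, Finset.mem_powersetCard]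
    refine ⟨⟨?_, ?_⟩, ?_⟩
    · intro x hx
      simp only [Finset.mem_image] at hx
      obtain ⟨c, hc, rfl⟩ := hx
      have h1 := (hmem c hc).1
      have h2 := (hmem s hsC).1
      have h3 : s ≤ c := C.min'_le c hc
      simp only [Finset.mem_Icc] at h1 h2 ⊢
      omega
    · rw [Finset.card_image_of_injective _ (sub_left_injective), hCcard]
    · simp only [Finset.mem_image]
      exact ⟨s, hsC, by ring⟩
  obtain ⟨e, he, hex⟩ := H _ hSship s
  simp only [Finset.coe_image, Set.mem_image, Finset.mem_coe] at he
  obtain ⟨c, hc, rfl⟩ := he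
  have : s + (c - s) = c := by ring
  rw [this] at hex
  exact (hmem c hc).2 hex

-- generic facts about the density sequence
noncomputable def dseq (X : Set ℤ) (N : ℕ) : ℝ :=
  ((X ∩ Set.Icc (-(N:ℤ)) (N:ℤ)).ncard : ℝ) / (2 * N + 1)

lemma inter_eq_filter (X : Set ℤ) (N : ℕ) :
    X ∩ Set.Icc (-(N:ℤ)) (N:ℤ) = ↑((Finset.Icc (-(N:ℤ)) (N:ℤ)).filter (fun x => x ∈ X)) := by
  ext x
  simp only [Set.mem_inter_iff, Set.mem_Icc, Finset.coe_filter, Set.mem_setOf_eq,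
    Finset.mem_Icc]
  tauto

lemma card_Icc_N (N : ℕ) : (Finset.Icc (-(N:ℤ)) (N:ℤ)).card = 2 * N + 1 := by
  rw [Int.card_Icc]; omega

lemma dseq_nonneg (X : Set ℤ) (N : ℕ) : 0 ≤ dseq X N := by
  unfold dseq; positivity

lemma dseq_le_one (X : Set ℤ) (N : ℕ) : dseq X N ≤ 1 := by
  unfold dseq
  rw [div_le_one (by positivity)]
  have h1 : (X ∩ Set.Icc (-(N:ℤ)) (N:ℤ)).ncard ≤ 2 * N + 1 := by
    rw [inter_eq_filter, Set.ncard_coe_finset]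
    calc ((Finset.Icc (-(N:ℤ)) (N:ℤ)).filter (fun x => x ∈ X)).card
        ≤ (Finset.Icc (-(N:ℤ)) (N:ℤ)).card := Finset.card_filter_le _ _
      _ = 2 * N + 1 := card_Icc_N N
  calc ((X ∩ Set.Icc (-(N:ℤ)) (N:ℤ)).ncard : ℝ) ≤ ((2*N+1 : ℕ) : ℝ) := by exact_mod_cast h1
    _ = 2 * N + 1 := by push_cast; ring

lemma miss_card_le (m k : ℕ) (hm : 1 ≤ m) (hk : 1 ≤ k) (X : Set ℤ)
    (H : ∀ S ∈ ships m k, Hits X (S : Set ℤ)) (N : ℕ) :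
    ((Finset.Icc (-(N:ℤ)) (N:ℤ)).filter (fun x => x ∉ X)).card ≤ (2*N/m + 1) * (k-1) := by
  set q := 2*N/m + 1 with hq
  have hsub : (Finset.Icc (-(N:ℤ)) (N:ℤ)).filter (fun x => x ∉ X) ⊆
      (Finset.range q).biUnion
        (fun j => (Finset.Icc (-(N:ℤ) + j*m) (-(N:ℤ) + j*m + m - 1)).filter (fun x => x ∉ X)) := by
    intro x hx
    simp only [Finset.mem_filter, Finset.mem_Icc] at hx
    obtain ⟨⟨hx1, hx2⟩, hx3⟩ := hx
    set d : ℕ := (x + N).toNat with hd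
    have hdx : (d : ℤ) = x + N := Int.toNat_of_nonneg (by omega)
    have hd2N : d ≤ 2*N := by omega
    have hjq : d / m < q := by
      have : d / m ≤ 2*N/m := Nat.div_le_div_right hd2N
      omega
    simp only [Finset.mem_biUnion, Finset.mem_range, Finset.mem_filter, Finset.mem_Icc]
    refine ⟨d / m, hjq, ⟨?_, ?_⟩, hx3⟩
    · have h1 : d / m * m ≤ d := Nat.div_mul_le_self d m
      have h2 : ((d / m : ℕ):ℤ) * m ≤ d := by exact_mod_cast h1
      omega
    · have h1 : d < d / m * m + m := Nat.lt_div_mul_add (by omega)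
      have h2 : (d:ℤ) < ((d / m : ℕ):ℤ) * m + m := by exact_mod_cast h1
      omega
  calc ((Finset.Icc (-(N:ℤ)) (N:ℤ)).filter (fun x => x ∉ X)).card
      ≤ ((Finset.range q).biUnion
        (fun j => (Finset.Icc (-(N:ℤ) + j*m) (-(N:ℤ) + j*m + m - 1)).filter (fun x => x ∉ X))).card :=
        Finset.card_le_card hsub
    _ ≤ ∑ j ∈ Finset.range q,
        ((Finset.Icc (-(N:ℤ) + j*m) (-(N:ℤ) + j*m + m - 1)).filter (fun x => x ∉ X)).card :=
        Finset.card_biUnion_le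
    _ ≤ ∑ j ∈ Finset.range q, (k-1) := by
        refine Finset.sum_le_sum (fun j _ => ?_)
        exact block_miss m k hk X H _
    _ = q * (k-1) := by rw [Finset.sum_const, Finset.card_range, smul_eq_mul]

lemma dseq_lb (m k : ℕ) (hm : 1 ≤ m) (hk : 1 ≤ k) (X : Set ℤ)
    (H : ∀ S ∈ ships m k, Hits X (S : Set ℤ)) (N : ℕ) :
    1 - ((k:ℝ)-1)/m - ((k:ℝ)-1)/(2*N+1) ≤ dseq X N := by
  set q := 2*N/m + 1 with hq
  have hIMi : ((Finset.Icc (-(N:ℤ)) (N:ℤ)).filter (fun x => x ∈ X)).card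
      + ((Finset.Icc (-(N:ℤ)) (N:ℤ)).filter (fun x => x ∉ X)).card = 2*N+1 := by
    rw [Finset.card_filter_add_card_filter_not, card_Icc_N]
  have hMi := miss_card_le m k hm hk X H N
  have hqm : q * m ≤ 2*N + m := by
    have := Nat.div_mul_le_self (2*N) m
    calc q * m = (2*N/m)*m + m := by ring
      _ ≤ 2*N + m := by omega
  set I := ((Finset.Icc (-(N:ℤ)) (N:ℤ)).filter (fun x => x ∈ X)).card with hI
  have hdseq : dseq X N = (I:ℝ) / (2*N+1) := by
    unfold dseq
    rw [inter_eq_filter, Set.ncard_coe_finset]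
  have h2N : (0:ℝ) < 2*(N:ℝ)+1 := by positivity
  have hM : (0:ℝ) < (m:ℝ) := by exact_mod_cast hm
  have hK1 : (0:ℝ) ≤ (k:ℝ) - 1 := by
    have : (1:ℝ) ≤ k := by exact_mod_cast hk
    linarith
  have key : (m:ℝ)*(2*N+1) ≤ I*m + ((k:ℝ)-1)*(2*N+1) + ((k:ℝ)-1)*m := by
    have h1 : ((Finset.Icc (-(N:ℤ)) (N:ℤ)).filter (fun x => x ∉ X)).card ≤ q * (k-1) := hMi
    have h1' : (((Finset.Icc (-(N:ℤ)) (N:ℤ)).filter (fun x => x ∉ X)).card : ℝ)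
        ≤ (q:ℝ) * ((k:ℝ)-1) := by
      have : ((q * (k-1) : ℕ) : ℝ) = (q:ℝ) * ((k:ℝ)-1) := by
        push_cast [Nat.cast_sub hk]
        ring
      calc (((Finset.Icc (-(N:ℤ)) (N:ℤ)).filter (fun x => x ∉ X)).card : ℝ)
          ≤ ((q * (k-1) : ℕ) : ℝ) := by exact_mod_cast h1
        _ = (q:ℝ) * ((k:ℝ)-1) := this
    have h2 : (q:ℝ) * m ≤ 2*(N:ℝ) + m := by exact_mod_cast hqm
    have h3 : (I:ℝ) + (((Finset.Icc (-(N:ℤ)) (N:ℤ)).filter (fun x => x ∉ X)).card : ℝ)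
        = 2*(N:ℝ)+1 := by exact_mod_cast hIMi
    nlinarith [mul_le_mul_of_nonneg_right h2 hK1, mul_le_mul_of_nonneg_left h1' hM.le]
  rw [hdseq, le_div_iff₀ h2N]
  have e1 : ((k:ℝ)-1)/m * m = (k:ℝ)-1 := div_mul_cancel₀ _ hM.ne'
  have e2 : ((k:ℝ)-1)/(2*(N:ℝ)+1) * (2*(N:ℝ)+1) = (k:ℝ)-1 := div_mul_cancel₀ _ h2N.ne'
  have hD : 0 ≤ ((k:ℝ)-1)/m := by positivity
  nlinarith [key, mul_le_mul_of_nonneg_right (le_refl (((k:ℝ)-1)/m)) h2N.le]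

lemma lowerDensity_eq (X : Set ℤ) : lowerDensity X = Filter.liminf (dseq X) Filter.atTop := rfl

lemma dseq_cobounded (X : Set ℤ) :
    Filter.IsCoboundedUnder (· ≥ ·) Filter.atTop (dseq X) :=
  Filter.isCoboundedUnder_ge_of_le _ (x := 1) (fun N => dseq_le_one X N)

lemma lowerDensity_nonneg (X : Set ℤ) : 0 ≤ lowerDensity X := by
  rw [lowerDensity_eq]
  exact Filter.le_liminf_of_le (dseq_cobounded X)
    (Filter.Eventually.of_forall (fun N => dseq_nonneg X N))

lemma lowerDensity_le_one (X : Set ℤ) : lowerDensity X ≤ 1 := by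
  rw [lowerDensity_eq]
  refine Filter.liminf_le_of_le (Filter.isBoundedUnder_of ⟨0, fun N => dseq_nonneg X N⟩) ?_
  intro b hb
  obtain ⟨N, hN⟩ := hb.exists
  exact hN.trans (dseq_le_one X N)

lemma lowerDensity_univ : lowerDensity (Set.univ : Set ℤ) = 1 := by
  rw [lowerDensity_eq]
  have : dseq (Set.univ : Set ℤ) = fun _ => (1:ℝ) := by
    funext N
    unfold dseq
    rw [Set.univ_inter]
    have : (Set.Icc (-(N:ℤ)) (N:ℤ)).ncard = 2*N+1 := by
      rw [← Finset.coe_Icc, Set.ncard_coe_finset, card_Icc_N]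
    rw [this]
    push_cast
    field_simp
  rw [this, Filter.liminf_const]

lemma lowerDensity_lb (m k : ℕ) (hm : 1 ≤ m) (hk : 1 ≤ k) (X : Set ℤ)
    (H : ∀ S ∈ ships m k, Hits X (S : Set ℤ)) :
    1 - ((k:ℝ)-1)/m ≤ lowerDensity X := by
  rw [lowerDensity_eq]
  have htop : Filter.Tendsto (fun N : ℕ => 2*(N:ℝ)+1) Filter.atTop Filter.atTop := by
    apply Filter.tendsto_atTop_add_const_right
    exact (tendsto_natCast_atTop_atTop).const_mul_atTop two_pos
  have h0 : Filter.Tendsto (fun N : ℕ => ((k:ℝ)-1)/(2*(N:ℝ)+1)) Filter.atTop (nhds 0) :=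
    Filter.Tendsto.div_atTop tendsto_const_nhds htop
  have hg : Filter.Tendsto (fun N : ℕ => 1 - ((k:ℝ)-1)/m - ((k:ℝ)-1)/(2*(N:ℝ)+1))
      Filter.atTop (nhds (1 - ((k:ℝ)-1)/m)) := by
    have := (tendsto_const_nhds (x := 1 - ((k:ℝ)-1)/m) (f := Filter.atTop (α := ℕ))).sub h0
    simpa using this
  calc 1 - ((k:ℝ)-1)/m
      = Filter.liminf (fun N : ℕ => 1 - ((k:ℝ)-1)/m - ((k:ℝ)-1)/(2*(N:ℝ)+1)) Filter.atTop :=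
        (hg.liminf_eq).symm
    _ ≤ Filter.liminf (dseq X) Filter.atTop := by
        apply Filter.liminf_le_liminf
        · exact Filter.Eventually.of_forall (fun N => dseq_lb m k hm hk X H N)
        · exact hg.isBoundedUnder_ge
        · exact dseq_cobounded X

-- properties of the chosen block length
lemma m_choice (n t : ℕ) (hn : 1 ≤ n) (ht : 1 ≤ t) :
    ∃ m : ℕ, t + 1 ≤ m ∧ (m - 1).choose t ≤ n ∧
      (t:ℝ) * (n:ℝ) ^ ((1:ℝ)/t) ≤ Real.exp 1 * m := by
  set A : ℝ := ((n * t.factorial : ℕ) : ℝ) ^ ((1:ℝ)/(t:ℝ)) with hA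
  have hAnn : (0:ℝ) ≤ ((n * t.factorial : ℕ) : ℝ) := by positivity
  have hA0 : 0 ≤ A := Real.rpow_nonneg hAnn _
  have htR : (0:ℝ) < t := by exact_mod_cast ht
  have hApow : A ^ t = ((n * t.factorial : ℕ) : ℝ) := by
    rw [hA, ← Real.rpow_natCast (((n * t.factorial : ℕ) : ℝ) ^ ((1:ℝ)/(t:ℝ))) t,
      ← Real.rpow_mul hAnn, one_div, inv_mul_cancel₀ (ne_of_gt htR), Real.rpow_one]
  refine ⟨max (t+1) (⌊A⌋₊ + 1), le_max_left _ _, ?_, ?_⟩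
  · -- choose bound
    rcases max_cases (t+1) (⌊A⌋₊ + 1) with ⟨hmax, _⟩ | ⟨hmax, _⟩ <;> rw [hmax]
    · simpa [Nat.choose_self] using hn
    · simp only [Nat.add_sub_cancel]
      have hpow : (⌊A⌋₊)^t ≤ n * t.factorial := by
        have hr : ((⌊A⌋₊ : ℝ))^t ≤ ((n * t.factorial : ℕ) : ℝ) := by
          calc ((⌊A⌋₊ : ℝ))^t ≤ A^t := by
                apply pow_le_pow_left₀ (by positivity) (Nat.floor_le hA0)
            _ = _ := hApow
        exact_mod_cast hr
      have hdesc : t.factorial * (⌊A⌋₊).choose t ≤ n * t.factorial := by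
        calc t.factorial * (⌊A⌋₊).choose t = (⌊A⌋₊).descFactorial t :=
              (Nat.descFactorial_eq_factorial_mul_choose _ _).symm
          _ ≤ (⌊A⌋₊)^t := Nat.descFactorial_le_pow _ _
          _ ≤ n * t.factorial := hpow
      have hfac : 0 < t.factorial := t.factorial_pos
      calc (⌊A⌋₊).choose t = t.factorial * (⌊A⌋₊).choose t / t.factorial := by
            rw [Nat.mul_div_cancel_left _ hfac]
        _ ≤ n * t.factorial / t.factorial := Nat.div_le_div_right hdesc
        _ = n := Nat.mul_div_cancel _ hfac
  · -- real bound
    set m := max (t+1) (⌊A⌋₊ + 1) with hm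
    have hmA : A < m := by
      calc A < ⌊A⌋₊ + 1 := Nat.lt_floor_add_one A
        _ ≤ m := by exact_mod_cast le_max_right (t+1) (⌊A⌋₊+1)
    have hfact : ((t:ℝ)/Real.exp 1)^t ≤ (t.factorial : ℝ) := by
      rw [div_pow, div_le_iff₀ (by positivity)]
      calc (t:ℝ)^t ≤ t.factorial * Real.exp t := fact_lb t
        _ = t.factorial * Real.exp 1 ^ t := by
            rw [← Real.exp_nat_mul, mul_one]
    have hAge : (n:ℝ) ^ ((1:ℝ)/t) * ((t:ℝ)/Real.exp 1) ≤ A := by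
      have h1 : A = (n:ℝ) ^ ((1:ℝ)/t) * ((t.factorial : ℕ) : ℝ) ^ ((1:ℝ)/t) := by
        rw [hA]
        push_cast
        rw [Real.mul_rpow (by positivity) (by positivity)]
      rw [h1]
      apply mul_le_mul_of_nonneg_left _ (by positivity)
      calc (t:ℝ)/Real.exp 1 = (((t:ℝ)/Real.exp 1) ^ t) ^ ((1:ℝ)/t) := by
            rw [← Real.rpow_natCast ((t:ℝ)/Real.exp 1) t, ← Real.rpow_mul (by positivity),
              mul_one_div, div_self (ne_of_gt htR), Real.rpow_one]
        _ ≤ ((t.factorial : ℕ) : ℝ) ^ ((1:ℝ)/t) := by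
            apply Real.rpow_le_rpow (by positivity) _ (by positivity)
            exact_mod_cast hfact
    have he : (0:ℝ) < Real.exp 1 := Real.exp_pos 1
    calc (t:ℝ) * (n:ℝ) ^ ((1:ℝ)/t)
        = Real.exp 1 * ((n:ℝ) ^ ((1:ℝ)/t) * ((t:ℝ)/Real.exp 1)) := by
          field_simp
      _ ≤ Real.exp 1 * A := by
          apply mul_le_mul_of_nonneg_left hAge he.le
      _ ≤ Real.exp 1 * m := by
          apply mul_le_mul_of_nonneg_left hmA.le he.le

/-- Optimal piercing density of a family of ships. -/
noncomputable def piercing (F : Set (Set ℤ)) : ℝ :=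
  sInf (lowerDensity '' {X | ∀ S ∈ F, Hits X S})

lemma hits_univ (S : Set ℤ) (hS : S.Nonempty) : Hits Set.univ S := by
  intro n; obtain ⟨s, hs⟩ := hS; exact ⟨s, hs, trivial⟩

lemma piercing_le_one (F : Set (Set ℤ)) (hF : ∀ S ∈ F, S.Nonempty) : piercing F ≤ 1 := by
  have hbdd : BddBelow (lowerDensity '' {X | ∀ S ∈ F, Hits X S}) := by
    refine ⟨0, ?_⟩
    rintro y ⟨X, -, rfl⟩
    exact lowerDensity_nonneg X
  have hmem : lowerDensity Set.univ ∈ lowerDensity '' {X | ∀ S ∈ F, Hits X S} :=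
    ⟨Set.univ, fun S hS => hits_univ S (hF S hS), rfl⟩
  calc piercing F ≤ lowerDensity Set.univ := csInf_le hbdd hmem
    _ = 1 := lowerDensity_univ

theorem stmt10 (n k : ℕ) (hn : 1 ≤ n) (hk : 2 ≤ k) :
    1 - Real.exp 1 / (n : ℝ) ^ ((1 : ℝ) / (k - 1)) ≤
      sSup {x : ℝ | ∃ T : Fin n → Set ℤ, (∀ i, (T i).Finite ∧ (T i).ncard = k) ∧
        x = piercing {S | ∃ i, S = T i}} := by
  classical
  obtain ⟨m, hm1, hchoose, hreal⟩ := m_choice n (k-1) hn (by omega)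
  have hkm : k ≤ m := by omega
  have hcast : ((k:ℝ) - 1) = ((k-1 : ℕ) : ℝ) := by
    push_cast [Nat.cast_sub (by omega : 1 ≤ k)]
    ring
  have hships_card : (ships m k).card ≤ n :=
    (ships_card_le m k (by omega) (by omega)).trans hchoose
  have hne : (ships m k).Nonempty := ships_nonempty m k (by omega) hkm
  have hcardpos : 0 < (ships m k).card := Finset.card_pos.mpr hne
  set e := (ships m k).equivFin with he
  set T : Fin n → Set ℤ := fun i =>
    ((e.symm ⟨min i.val ((ships m k).card - 1), by omega⟩ : {x // x ∈ ships m k}) : Finset ℤ)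
    with hTdef
  have hmemships : ∀ i : Fin n, ∃ s ∈ ships m k, T i = ↑s := by
    intro i
    exact ⟨_, (e.symm ⟨min i.val ((ships m k).card - 1), by omega⟩).2, rfl⟩
  have hcardk : ∀ s ∈ ships m k, s.card = k := by
    intro s hs
    simp only [ships, Finset.mem_filter, Finset.mem_powersetCard] at hs
    exact hs.1.2
  have hT : ∀ i, (T i).Finite ∧ (T i).ncard = k := by
    intro i
    obtain ⟨s, hs, hTi⟩ := hmemships i
    rw [hTi]
    exact ⟨s.finite_toSet, by rw [Set.ncard_coe_finset]; exact hcardk s hs⟩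
  have hrange : {S : Set ℤ | ∃ i, S = T i} = {S : Set ℤ | ∃ s ∈ ships m k, S = ↑s} := by
    ext S
    simp only [Set.mem_setOf_eq]
    constructor
    · rintro ⟨i, rfl⟩
      exact hmemships i
    · rintro ⟨s, hs, rfl⟩
      refine ⟨⟨(e ⟨s, hs⟩).val, lt_of_lt_of_le (e ⟨s, hs⟩).isLt hships_card⟩, ?_⟩
      have hmin : min (e ⟨s, hs⟩).val ((ships m k).card - 1) = (e ⟨s, hs⟩).val := by
        have := (e ⟨s, hs⟩).isLt
        omega
      rw [hTdef]
      simp only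
      congr 1
      have : (⟨min (e ⟨s, hs⟩).val ((ships m k).card - 1), by omega⟩ : Fin (ships m k).card)
          = e ⟨s, hs⟩ := by
        apply Fin.ext
        simpa using hmin
      rw [this, Equiv.symm_apply_apply]
  have hFne : ∀ S ∈ {S : Set ℤ | ∃ i, S = T i}, S.Nonempty := by
    rintro S ⟨i, rfl⟩
    obtain ⟨s, hs, hTi⟩ := hmemships i
    rw [hTi]
    have : s.Nonempty := Finset.card_pos.mp (by rw [hcardk s hs]; omega)
    exact ⟨this.choose, this.choose_spec⟩
  have hBdd : BddAbove {x : ℝ | ∃ T : Fin n → Set ℤ, (∀ i, (T i).Finite ∧ (T i).ncard = k) ∧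
      x = piercing {S | ∃ i, S = T i}} := by
    refine ⟨1, ?_⟩
    rintro x ⟨T', hT', rfl⟩
    apply piercing_le_one
    rintro S ⟨i, rfl⟩
    apply Set.nonempty_of_ncard_ne_zero
    rw [(hT' i).2]
    omega
  have hmem : piercing {S : Set ℤ | ∃ i, S = T i} ∈
      {x : ℝ | ∃ T : Fin n → Set ℤ, (∀ i, (T i).Finite ∧ (T i).ncard = k) ∧
        x = piercing {S | ∃ i, S = T i}} := ⟨T, hT, rfl⟩
  refine le_trans ?_ (le_csSup hBdd hmem)
  -- lower bound on piercing of our family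
  unfold piercing
  apply le_csInf
  · exact ⟨lowerDensity Set.univ, Set.univ, fun S hS => hits_univ S (hFne S hS), rfl⟩
  · rintro b ⟨X, hX, rfl⟩
    have H : ∀ S ∈ ships m k, Hits X (S : Set ℤ) := by
      intro s hs
      apply hX
      rw [hrange]
      exact ⟨s, hs, rfl⟩
    have h1 : 1 - ((k:ℝ)-1)/m ≤ lowerDensity X := lowerDensity_lb m k (by omega) (by omega) X H
    have hnpos : (0:ℝ) < (n:ℝ) ^ ((1:ℝ)/((k:ℝ)-1)) := by
      apply Real.rpow_pos_of_pos
      exact_mod_cast hn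
    have hmpos : (0:ℝ) < m := by
      have : 0 < m := by omega
      exact_mod_cast this
    have h2 : ((k:ℝ)-1)/m ≤ Real.exp 1 / (n : ℝ) ^ ((1 : ℝ) / ((k:ℝ) - 1)) := by
      rw [div_le_div_iff₀ hmpos hnpos]
      have : ((k:ℝ)-1) * (n:ℝ) ^ ((1:ℝ)/((k:ℝ)-1)) = ((k-1:ℕ):ℝ) * (n:ℝ) ^ ((1:ℝ)/((k-1:ℕ):ℝ)) := by
        rw [hcast]
      rw [this]
      calc ((k-1:ℕ):ℝ) * (n:ℝ) ^ ((1:ℝ)/((k-1:ℕ):ℝ)) ≤ Real.exp 1 * m := hreal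
        _ = Real.exp 1 * m := rfl
    linarith
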